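/- If p is a prime, n and r are nonnegative integers, and s is a positive integer with 1 ≤ s < p, then C(np, rp + s) ≡ (r+1) · C(n, r+1) · C(p, s) (mod p^2). -/

import Mathlib

lemma bailey_aux_A (p : ℕ) (hp : p.Prime) : ∀ n m, ¬ p ∣ m → p ∣ (n * p).choose m := by
  intro n
  induction n with
  | zero =>
      intro m hm
      have hm0 : 0 < m := Nat.pos_of_ne_zero (by rintro rfl; exact hm (dvd_zero p))
      rw [Nat.zero_mul, Nat.choose_eq_zero_of_lt hm0]
      exact dvd_zero p
  | succ n ih =>
      intro m hm
      have h : (n + 1) * p = p + n * p := by ring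
      rw [h, Nat.add_choose_eq]
      refine Finset.dvd_sum ?_
      rintro ⟨j, i⟩ hji
      rw [Finset.HasAntidiagonal.mem_antidiagonal] at hji
      dsimp only
      rcases Nat.lt_trichotomy j p with hj | hj | hj
      · rcases Nat.eq_zero_or_pos j with rfl | hj0
        · have hi : ¬ p ∣ i := by
            have : i = m := by omega
            rw [this]; exact hm
          exact Dvd.dvd.mul_left (ih i hi) _
        · exact Dvd.dvd.mul_right (hp.dvd_choose_self hj0.ne' hj) _
      · have hi : ¬ p ∣ i := by
          intro hd
          exact hm (by rw [← hji, hj]; exact Nat.dvd_add dvd_rfl hd)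
        exact Dvd.dvd.mul_left (ih i hi) _
      · rw [Nat.choose_eq_zero_of_lt hj, Nat.zero_mul]
        exact dvd_zero p

lemma bailey_aux_B (p : ℕ) (hp : p.Prime) :
    ∀ n r, (n * p).choose (r * p) ≡ n.choose r [MOD p] := by
  haveI : NeZero p := ⟨hp.ne_zero⟩
  intro n
  induction n with
  | zero =>
      intro r
      rcases Nat.eq_zero_or_pos r with rfl | hr
      · simp only [Nat.zero_mul, Nat.choose_self]
        exact Nat.ModEq.refl 1
      · have h1 : 0 < r * p := Nat.mul_pos hr hp.pos
        rw [Nat.zero_mul, Nat.choose_eq_zero_of_lt h1, Nat.choose_eq_zero_of_lt hr]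
  | succ n ih =>
      intro r
      rcases r with _ | r
      · simp only [Nat.zero_mul, Nat.choose_zero_right]
        exact Nat.ModEq.refl 1
      · rw [← ZMod.natCast_eq_natCast_iff]
        have h : (n + 1) * p = p + n * p := by ring
        rw [h, Nat.add_choose_eq, Finset.Nat.sum_antidiagonal_eq_sum_range_succ_mk]
        push_cast
        have hsum : ∀ j ∈ Finset.range ((r + 1) * p + 1),
            (((p.choose j : ℕ) : ZMod p) * (((n * p).choose ((r + 1) * p - j) : ℕ) : ZMod p))
              = (if j = 0 then ((n.choose (r + 1) : ℕ) : ZMod p) else 0)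
                + (if j = p then ((n.choose r : ℕ) : ZMod p) else 0) := by
          intro j hj
          rw [Finset.mem_range] at hj
          by_cases hj0 : j = 0
          · rw [hj0, if_pos rfl, if_neg (Ne.symm hp.ne_zero), add_zero,
              Nat.choose_zero_right, Nat.cast_one, one_mul, Nat.sub_zero]
            exact (ZMod.natCast_eq_natCast_iff _ _ p).mpr (ih (r + 1))
          · by_cases hjp : j = p
            · rw [hjp, if_neg hp.ne_zero, if_pos rfl, zero_add]
              have hk : (r + 1) * p - p = r * p := by
                have : (r + 1) * p = r * p + p := by ring
                omega
              rw [hk, Nat.choose_self, Nat.cast_one, one_mul]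
              exact (ZMod.natCast_eq_natCast_iff _ _ p).mpr (ih r)
            · rw [if_neg hj0, if_neg hjp, add_zero]
              rcases Nat.lt_or_ge j p with hlt | hge
              · have : ((p.choose j : ℕ) : ZMod p) = 0 :=
                  (ZMod.natCast_eq_zero_iff _ _).mpr
                    (hp.dvd_choose_self hj0 hlt)
                rw [this, zero_mul]
              · have hlt : p < j := lt_of_le_of_ne hge (Ne.symm hjp)
                rw [Nat.choose_eq_zero_of_lt hlt, Nat.cast_zero, zero_mul]
        rw [Finset.sum_congr rfl hsum, Finset.sum_add_distrib,
          Finset.sum_ite_eq' _ 0 (fun _ => ((n.choose (r + 1) : ℕ) : ZMod p)),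
          Finset.sum_ite_eq' _ p (fun _ => ((n.choose r : ℕ) : ZMod p))]
        have h0 : (0 : ℕ) ∈ Finset.range ((r + 1) * p + 1) := by
          rw [Finset.mem_range]; omega
        have hpmem : p ∈ Finset.range ((r + 1) * p + 1) := by
          have := Nat.le_mul_of_pos_left p (show 0 < r + 1 by omega)
          rw [Finset.mem_range]; omega
        rw [if_pos h0, if_pos hpmem, Nat.choose_succ_succ]
        push_cast
        ring

lemma bailey_aux_C (p : ℕ) (hp : p.Prime) (s : ℕ) (hs1 : 1 ≤ s) (hs2 : s < p) :
    ∀ n r, (n * p).choose (r * p + s) ≡ (r + 1) * n.choose (r + 1) * p.choose s [MOD p ^ 2] := by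
  haveI : NeZero (p ^ 2) := ⟨pow_ne_zero 2 hp.ne_zero⟩
  intro n
  induction n with
  | zero =>
      intro r
      rw [Nat.zero_mul, Nat.choose_eq_zero_of_lt (show 0 < r * p + s by omega),
        Nat.choose_eq_zero_of_lt (Nat.succ_pos r), Nat.mul_zero, Nat.zero_mul]
  | succ n ih =>
      intro r
      rw [← ZMod.natCast_eq_natCast_iff]
      have h : (n + 1) * p = p + n * p := by ring
      rw [h, Nat.add_choose_eq, Finset.Nat.sum_antidiagonal_eq_sum_range_succ_mk]
      push_cast
      have hsum : ∀ j ∈ Finset.range (r * p + s + 1),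
          (((p.choose j : ℕ) : ZMod (p ^ 2)) * (((n * p).choose (r * p + s - j) : ℕ) : ZMod (p ^ 2)))
            = (if j = 0 then (((r + 1) * n.choose (r + 1) * p.choose s : ℕ) : ZMod (p ^ 2)) else 0)
              + (if j = s then ((n.choose r * p.choose s : ℕ) : ZMod (p ^ 2)) else 0)
              + (if j = p then ((r * n.choose r * p.choose s : ℕ) : ZMod (p ^ 2)) else 0) := by
        intro j hj
        rw [Finset.mem_range] at hj
        by_cases hj0 : j = 0
        · rw [hj0, if_pos rfl, if_neg (show (0 : ℕ) ≠ s by omega),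
            if_neg (show (0 : ℕ) ≠ p by omega), add_zero, add_zero,
            Nat.choose_zero_right, Nat.cast_one, one_mul, Nat.sub_zero]
          exact (ZMod.natCast_eq_natCast_iff _ _ (p ^ 2)).mpr (ih r)
        · by_cases hjs : j = s
          · rw [hjs, if_neg (show s ≠ 0 by omega), if_pos rfl,
              if_neg (show s ≠ p by omega), zero_add, add_zero,
              show r * p + s - s = r * p by omega]
            obtain ⟨u, hu⟩ := hp.dvd_choose_self (show s ≠ 0 by omega) hs2
            have h2 : p * ((n * p).choose (r * p)) ≡ p * (n.choose r) [MOD p * p] :=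
              (bailey_aux_B p hp n r).mul_left' p
            have h3 : u * (p * ((n * p).choose (r * p))) ≡ u * (p * (n.choose r)) [MOD p * p] :=
              h2.mul_left u
            have h4 : p.choose s * ((n * p).choose (r * p)) ≡ n.choose r * p.choose s [MOD p ^ 2] := by
              have e1 : p.choose s * ((n * p).choose (r * p)) = u * (p * ((n * p).choose (r * p))) := by
                rw [hu]; ring
              have e2 : n.choose r * p.choose s = u * (p * (n.choose r)) := by
                rw [hu]; ring
              rw [e1, e2, pow_two]
              exact h3
            rw [← Nat.cast_mul]
            exact (ZMod.natCast_eq_natCast_iff _ _ (p ^ 2)).mpr h4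
          · by_cases hjp : j = p
            · rw [hjp] at hj
              rw [hjp, if_neg (show p ≠ 0 by omega), if_neg (show p ≠ s by omega),
                if_pos rfl, zero_add, zero_add]
              rcases r with _ | r'
              · exfalso
                have : (0 : ℕ) * p = 0 := Nat.zero_mul p
                omega
              · have hk : (r' + 1) * p + s - p = r' * p + s := by
                  have : (r' + 1) * p = r' * p + p := by ring
                  omega
                rw [hk, Nat.choose_self, Nat.cast_one, one_mul]
                exact (ZMod.natCast_eq_natCast_iff _ _ (p ^ 2)).mpr (ih r')
            · rw [if_neg hj0, if_neg hjs, if_neg hjp, add_zero, add_zero]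
              rcases Nat.lt_or_ge j p with hlt | hge
              · have hd1 : p ∣ p.choose j := hp.dvd_choose_self hj0 hlt
                have hnd : ¬ p ∣ (r * p + s - j) := by
                  rintro ⟨t, ht⟩
                  have hjk : j ≤ r * p + s := by omega
                  have e : s + r * p = j + p * t := by omega
                  have hmod : s % p = j % p := by
                    rw [← Nat.add_mul_mod_self_right s r p, e, Nat.add_mul_mod_self_left]
                  rw [Nat.mod_eq_of_lt hs2, Nat.mod_eq_of_lt hlt] at hmod
                  exact hjs hmod.symm
                have hd2 : p ∣ (n * p).choose (r * p + s - j) := bailey_aux_A p hp n _ hnd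
                have hdd : p ^ 2 ∣ p.choose j * ((n * p).choose (r * p + s - j)) := by
                  rw [pow_two]; exact mul_dvd_mul hd1 hd2
                rw [← Nat.cast_mul]
                exact (ZMod.natCast_eq_zero_iff _ _).mpr hdd
              · have hlt : p < j := lt_of_le_of_ne hge (Ne.symm hjp)
                rw [Nat.choose_eq_zero_of_lt hlt, Nat.cast_zero, zero_mul]
      rw [Finset.sum_congr rfl hsum, Finset.sum_add_distrib, Finset.sum_add_distrib,
        Finset.sum_ite_eq' _ 0 (fun _ => (((r + 1) * n.choose (r + 1) * p.choose s : ℕ) : ZMod (p ^ 2))),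
        Finset.sum_ite_eq' _ s (fun _ => ((n.choose r * p.choose s : ℕ) : ZMod (p ^ 2))),
        Finset.sum_ite_eq' _ p (fun _ => ((r * n.choose r * p.choose s : ℕ) : ZMod (p ^ 2)))]
      have h0 : (0 : ℕ) ∈ Finset.range (r * p + s + 1) := by
        rw [Finset.mem_range]; omega
      have hsmem : s ∈ Finset.range (r * p + s + 1) := by rw [Finset.mem_range]; omega
      have hC : (if p ∈ Finset.range (r * p + s + 1) then
          ((r * n.choose r * p.choose s : ℕ) : ZMod (p ^ 2)) else 0)
          = ((r * n.choose r * p.choose s : ℕ) : ZMod (p ^ 2)) := by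
        rcases r with _ | r'
        · have hmem : p ∉ Finset.range (0 * p + s + 1) := by
            rw [Finset.mem_range]
            have : (0 : ℕ) * p = 0 := Nat.zero_mul p
            omega
          rw [if_neg hmem, Nat.zero_mul, Nat.zero_mul, Nat.cast_zero]
        · rw [if_pos]
          have := Nat.le_mul_of_pos_left p (show 0 < r' + 1 by omega)
          rw [Finset.mem_range]; omega
      rw [if_pos h0, if_pos hsmem, hC, Nat.choose_succ_succ]
      push_cast
      ring

theorem bailey_1991 (p : ℕ) (hp : p.Prime) (n r s : ℕ) (hs1 : 1 ≤ s) (hs2 : s < p) :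
    Nat.choose (n * p) (r * p + s) ≡
      (r + 1) * Nat.choose n (r + 1) * Nat.choose p s [MOD p ^ 2] := by
  exact bailey_aux_C p hp s hs1 hs2 n r
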